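/- Let A ∈ M_n(ℝ) be a nonsingular full matrix with the inverse cyclic property, and set d := ∏_i a_{ii}, c := a_{12}a_{23}⋯a_{(n-1)n}a_{n1}. Then A^{-1} = B where b_{i,i+1} = -a_{i,i+1}(∏_{k≠i,i+1} a_{kk})/(d-c), b_{n1} = -a_{n1}(∏_{k=2}^{n-1} a_{kk})/(d-c), b_{ii} = (∏_{k≠i} a_{kk})/(d-c), and all other entries of B are zero. -/

import Mathlib

open Matrix Finset

/-- A matrix (of order ≥ 2) has the *inverse cyclic property* if all its diagonal
entries are nonzero and the three cyclic entry conditions hold. -/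
def InvCyclic {n : ℕ} (A : Matrix (Fin (n + 2)) (Fin (n + 2)) ℝ) : Prop :=
  (∀ i, A i i ≠ 0) ∧
  (∀ i k j : Fin (n + 2), i < k → k < j → A i j = A i k * A k j / A k k) ∧
  (∀ i j : Fin (n + 2), j < i → i ≠ Fin.last (n + 1) →
    A i j = A i (Fin.last (n + 1)) * A (Fin.last (n + 1)) j /
      A (Fin.last (n + 1)) (Fin.last (n + 1))) ∧
  (∀ j : Fin (n + 2), j < Fin.last (n + 1) →
    A (Fin.last (n + 1)) j = A (Fin.last (n + 1)) 0 * A 0 j / A 0 0)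

/-- `d`, the product of the diagonal entries. -/
def diagProd {n : ℕ} (A : Matrix (Fin (n + 2)) (Fin (n + 2)) ℝ) : ℝ := ∏ i, A i i

/-- `c`, the cyclic product `a₁₂a₂₃⋯a_{(n-1)n}a_{n1}`. -/
def cycProd {n : ℕ} (A : Matrix (Fin (n + 2)) (Fin (n + 2)) ℝ) : ℝ :=
  ∏ i : Fin (n + 2), A i (i + 1)
/-- A *bi-diagonal south-west* (bdsw) matrix: the diagonal, the super diagonal and the
south-west corner entry are nonzero, and all other entries are zero. -/
def Bdsw {n : ℕ} (B : Matrix (Fin (n + 2)) (Fin (n + 2)) ℝ) : Prop :=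
  (∀ i, B i i ≠ 0) ∧
  (∀ i j : Fin (n + 2), (j : ℕ) = (i : ℕ) + 1 → B i j ≠ 0) ∧
  (B (Fin.last (n + 1)) 0 ≠ 0) ∧
  (∀ i j : Fin (n + 2), i ≠ j → (j : ℕ) ≠ (i : ℕ) + 1 →
    ¬(i = Fin.last (n + 1) ∧ j = 0) → B i j = 0)

namespace Stmt6Aux

variable {n : ℕ}

/-- The numerator matrix `C`. -/
def Cmat (A : Matrix (Fin (n + 2)) (Fin (n + 2)) ℝ) : Matrix (Fin (n + 2)) (Fin (n + 2)) ℝ :=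
  Matrix.of fun (i j : Fin (n + 2)) =>
    if (j : ℕ) = (i : ℕ) + 1 then
      -A i j * (∏ k ∈ Finset.univ \ {i, j}, A k k)
    else if i = Fin.last (n + 1) ∧ j = 0 then
      -A i j * (∏ k ∈ Finset.univ \ {i, j}, A k k)
    else if i = j then (∏ k ∈ Finset.univ \ {i}, A k k)
    else 0

lemma prodD1 (A : Matrix (Fin (n + 2)) (Fin (n + 2)) ℝ) (i : Fin (n + 2)) :
    A i i * ∏ k ∈ Finset.univ \ {i}, A k k = diagProd A := by
  rw [diagProd, ← Finset.prod_sdiff (Finset.subset_univ {i}), Finset.prod_singleton]; ring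

lemma prodD2 (A : Matrix (Fin (n + 2)) (Fin (n + 2)) ℝ) (i j : Fin (n + 2)) (h : i ≠ j) :
    A i i * A j j * ∏ k ∈ Finset.univ \ {i, j}, A k k = diagProd A := by
  rw [diagProd, ← Finset.prod_sdiff (Finset.subset_univ {i, j}), Finset.prod_pair h]; ring

lemma prodSplit (A : Matrix (Fin (n + 2)) (Fin (n + 2)) ℝ) (hfull : ∀ i j, A i j ≠ 0)
    (a b : Fin (n + 2)) (h : a ≠ b) :
    ∏ k ∈ Finset.univ \ {b}, A k k = A a a * ∏ k ∈ Finset.univ \ {a, b}, A k k := by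
  apply mul_left_cancel₀ (hfull b b)
  rw [prodD1 A b]
  linear_combination - prodD2 A a b h

lemma aux_U {A : Matrix (Fin (n + 2)) (Fin (n + 2)) ℝ} (hic : InvCyclic A) :
    ∀ i j : Fin (n + 2), i ≤ j →
      A i j * A 0 (Fin.last (n + 1)) = A i (Fin.last (n + 1)) * A 0 j := by
  obtain ⟨h0, h2, -, -⟩ := hic
  intro i j hij
  by_cases hi : i = 0
  · subst hi; ring
  by_cases hjL : j = Fin.last (n + 1)
  · subst hjL; ring
  have hi0 : (0 : Fin (n + 2)) < i := Fin.pos_of_ne_zero hi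
  have hjL' : j < Fin.last (n + 1) := lt_of_le_of_ne (Fin.le_last j) hjL
  have hiL : i < Fin.last (n + 1) := lt_of_le_of_lt hij hjL'
  have e2 : A 0 (Fin.last (n + 1)) = A 0 i * A i (Fin.last (n + 1)) / A i i := h2 0 i _ hi0 hiL
  rcases eq_or_lt_of_le hij with rfl | hlt
  · rw [e2]; field_simp [h0 i]
  · have e1 : A 0 j = A 0 i * A i j / A i i := h2 0 i j hi0 hlt
    rw [e1, e2]; field_simp [h0 i]

lemma aux_Lo {A : Matrix (Fin (n + 2)) (Fin (n + 2)) ℝ} (hic : InvCyclic A) :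
    ∀ i j : Fin (n + 2), j < i →
      A i j * (A (Fin.last (n + 1)) (Fin.last (n + 1)) * A 0 0)
        = A i (Fin.last (n + 1)) * A (Fin.last (n + 1)) 0 * A 0 j := by
  obtain ⟨h0, -, h3, h4⟩ := hic
  intro i j hji
  by_cases hiL : i = Fin.last (n + 1)
  · subst hiL
    rw [h4 j hji]
    field_simp [h0 0]
  · have hiL' : i < Fin.last (n + 1) := lt_of_le_of_ne (Fin.le_last i) hiL
    have hjL : j < Fin.last (n + 1) := hji.trans hiL'
    rw [h3 i j hji hiL, h4 j hjL]
    field_simp [h0 0, h0 (Fin.last (n + 1))]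

lemma aux_key {A : Matrix (Fin (n + 2)) (Fin (n + 2)) ℝ} (hfull : ∀ i j, A i j ≠ 0)
    (hic : InvCyclic A) :
    cycProd A * (A 0 0 * A (Fin.last (n + 1)) (Fin.last (n + 1)))
      = A 0 (Fin.last (n + 1)) * A (Fin.last (n + 1)) 0 * diagProd A := by
  have hstar : (∏ i : Fin (n + 1), A i.castSucc i.succ) * A 0 0
      = A 0 (Fin.last (n + 1)) * ∏ i : Fin (n + 1), A i.castSucc i.castSucc := by
    apply mul_right_cancel₀ (pow_ne_zero (n + 1) (hfull 0 (Fin.last (n + 1))))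
    calc ((∏ i : Fin (n + 1), A i.castSucc i.succ) * A 0 0) * A 0 (Fin.last (n + 1)) ^ (n + 1)
        = (∏ i : Fin (n + 1), A i.castSucc i.succ * A 0 (Fin.last (n + 1))) * A 0 0 := by
          rw [Finset.prod_mul_distrib, Finset.prod_const, Finset.card_univ, Fintype.card_fin]
          ring
      _ = (∏ i : Fin (n + 1), A i.castSucc (Fin.last (n + 1)) * A 0 i.succ) * A 0 0 := by
          refine congrArg (· * A 0 0) (Finset.prod_congr rfl fun i _ => ?_)
          exact aux_U hic i.castSucc i.succ (Fin.castSucc_lt_succ : i.castSucc < i.succ).le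
      _ = (∏ i : Fin (n + 1), A i.castSucc (Fin.last (n + 1)))
            * ((∏ i : Fin (n + 1), A 0 i.succ) * A 0 0) := by
          rw [Finset.prod_mul_distrib]; ring
      _ = (∏ i : Fin (n + 1), A i.castSucc (Fin.last (n + 1))) * ∏ i : Fin (n + 2), A 0 i := by
          rw [Fin.prod_univ_succ (f := fun i : Fin (n + 2) => A 0 i)]; ring
      _ = (∏ i : Fin (n + 1), A i.castSucc (Fin.last (n + 1)))
            * ((∏ i : Fin (n + 1), A 0 i.castSucc) * A 0 (Fin.last (n + 1))) := by
          rw [Fin.prod_univ_castSucc (f := fun i : Fin (n + 2) => A 0 i)]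
      _ = (∏ i : Fin (n + 1), A i.castSucc (Fin.last (n + 1)) * A 0 i.castSucc)
            * A 0 (Fin.last (n + 1)) := by
          rw [Finset.prod_mul_distrib]; ring
      _ = (∏ i : Fin (n + 1), A i.castSucc i.castSucc * A 0 (Fin.last (n + 1)))
            * A 0 (Fin.last (n + 1)) := by
          refine congrArg (· * A 0 (Fin.last (n + 1))) (Finset.prod_congr rfl fun i _ => ?_)
          exact (aux_U hic i.castSucc i.castSucc le_rfl).symm
      _ = (A 0 (Fin.last (n + 1)) * ∏ i : Fin (n + 1), A i.castSucc i.castSucc)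
            * A 0 (Fin.last (n + 1)) ^ (n + 1) := by
          rw [Finset.prod_mul_distrib, Finset.prod_const, Finset.card_univ, Fintype.card_fin]
          ring
  have hc : cycProd A = (∏ i : Fin (n + 1), A i.castSucc i.succ) * A (Fin.last (n + 1)) 0 := by
    rw [cycProd, Fin.prod_univ_castSucc (f := fun i : Fin (n + 2) => A i (i + 1)),
      Fin.last_add_one]
    congr 1
    exact Finset.prod_congr rfl fun i _ => by rw [Fin.coeSucc_eq_succ]
  have hdd : diagProd A = (∏ i : Fin (n + 1), A i.castSucc i.castSucc)
      * A (Fin.last (n + 1)) (Fin.last (n + 1)) := by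
    rw [diagProd, Fin.prod_univ_castSucc (f := fun i : Fin (n + 2) => A i i)]
  rw [hc, hdd]
  linear_combination (A (Fin.last (n + 1)) 0 * A (Fin.last (n + 1)) (Fin.last (n + 1))) * hstar

lemma aux_pair {A : Matrix (Fin (n + 2)) (Fin (n + 2)) ℝ} (hfull : ∀ i j, A i j ≠ 0)
    (hic : InvCyclic A) (j' j : Fin (n + 2)) (h : (j : ℕ) = (j' : ℕ) + 1) :
    A j' j * A j j' * (A 0 0 * A (Fin.last (n + 1)) (Fin.last (n + 1)))
      = A 0 (Fin.last (n + 1)) * A (Fin.last (n + 1)) 0 * (A j' j' * A j j) := by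
  have hlt : j' < j := Fin.lt_def.mpr (by omega)
  have e1 : A j' j = A j' (Fin.last (n + 1)) * A 0 j / A 0 (Fin.last (n + 1)) :=
    (eq_div_iff (hfull 0 (Fin.last (n + 1)))).mpr (aux_U hic j' j hlt.le)
  have e2 : A j' j' = A j' (Fin.last (n + 1)) * A 0 j' / A 0 (Fin.last (n + 1)) :=
    (eq_div_iff (hfull 0 (Fin.last (n + 1)))).mpr (aux_U hic j' j' le_rfl)
  have e3 : A j j = A j (Fin.last (n + 1)) * A 0 j / A 0 (Fin.last (n + 1)) :=
    (eq_div_iff (hfull 0 (Fin.last (n + 1)))).mpr (aux_U hic j j le_rfl)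
  have e4 : A j j' = A j (Fin.last (n + 1)) * A (Fin.last (n + 1)) 0 * A 0 j'
      / (A (Fin.last (n + 1)) (Fin.last (n + 1)) * A 0 0) :=
    (eq_div_iff (mul_ne_zero (hfull _ _) (hfull 0 0))).mpr (aux_Lo hic j j' hlt)
  rw [e1, e2, e3, e4]
  field_simp [hfull 0 0, hfull 0 (Fin.last (n + 1)),
    hfull (Fin.last (n + 1)) (Fin.last (n + 1))]

lemma aux_identI {A : Matrix (Fin (n + 2)) (Fin (n + 2)) ℝ} (hfull : ∀ i j, A i j ≠ 0)
    (hic : InvCyclic A) (j' j : Fin (n + 2)) (h : (j : ℕ) = (j' : ℕ) + 1) :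
    A j' j * A j j' * ∏ k ∈ Finset.univ \ {j', j}, A k k = cycProd A := by
  have hne : j' ≠ j := fun h' => by rw [h'] at h; omega
  have hd := prodD2 A j' j hne
  have hp := aux_pair hfull hic j' j h
  have hk := aux_key hfull hic
  apply mul_right_cancel₀ (mul_ne_zero (mul_ne_zero (mul_ne_zero (hfull 0 0)
    (hfull (Fin.last (n + 1)) (Fin.last (n + 1)))) (hfull j' j')) (hfull j j))
  linear_combination (A j' j' * A j j * (∏ k ∈ Finset.univ \ {j', j}, A k k)) * hp
    + (A 0 (Fin.last (n + 1)) * A (Fin.last (n + 1)) 0 * A j' j' * A j j) * hd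
    - (A j' j' * A j j) * hk

lemma aux_identII {A : Matrix (Fin (n + 2)) (Fin (n + 2)) ℝ} (hfull : ∀ i j, A i j ≠ 0)
    (hic : InvCyclic A) (hL0 : Fin.last (n + 1) ≠ (0 : Fin (n + 2))) :
    A 0 (Fin.last (n + 1)) * A (Fin.last (n + 1)) 0
      * ∏ k ∈ Finset.univ \ {Fin.last (n + 1), (0 : Fin (n + 2))}, A k k = cycProd A := by
  have hd0 := prodD2 A (Fin.last (n + 1)) 0 hL0
  have hk := aux_key hfull hic
  apply mul_right_cancel₀ (mul_ne_zero (hfull 0 0) (hfull (Fin.last (n + 1)) (Fin.last (n + 1))))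
  linear_combination A 0 (Fin.last (n + 1)) * A (Fin.last (n + 1)) 0 * hd0 - hk

lemma offdiag1 {A : Matrix (Fin (n + 2)) (Fin (n + 2)) ℝ} (hfull : ∀ i j, A i j ≠ 0)
    (hic : InvCyclic A) (i j' j : Fin (n + 2)) (h : (j : ℕ) = (j' : ℕ) + 1) (hij : i ≠ j) :
    A i j * A j' j' = A i j' * A j' j := by
  have hlt : j' < j := Fin.lt_def.mpr (by omega)
  have e3 : A j' j = A j' (Fin.last (n + 1)) * A 0 j / A 0 (Fin.last (n + 1)) :=
    (eq_div_iff (hfull 0 (Fin.last (n + 1)))).mpr (aux_U hic j' j hlt.le)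
  have e4 : A j' j' = A j' (Fin.last (n + 1)) * A 0 j' / A 0 (Fin.last (n + 1)) :=
    (eq_div_iff (hfull 0 (Fin.last (n + 1)))).mpr (aux_U hic j' j' le_rfl)
  by_cases hle : i ≤ j'
  · have e1 : A i j = A i (Fin.last (n + 1)) * A 0 j / A 0 (Fin.last (n + 1)) :=
      (eq_div_iff (hfull 0 (Fin.last (n + 1)))).mpr (aux_U hic i j (hle.trans hlt.le))
    have e2 : A i j' = A i (Fin.last (n + 1)) * A 0 j' / A 0 (Fin.last (n + 1)) :=
      (eq_div_iff (hfull 0 (Fin.last (n + 1)))).mpr (aux_U hic i j' hle)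
    rw [e1, e2, e3, e4]
    field_simp [hfull 0 0, hfull 0 (Fin.last (n + 1)),
      hfull (Fin.last (n + 1)) (Fin.last (n + 1))]
  · have hvne : (i : ℕ) ≠ (j : ℕ) := fun hv => hij (Fin.ext hv)
    have hj'i : j' < i := not_le.mp hle
    have hji : j < i := Fin.lt_def.mpr (by have := Fin.lt_def.mp hj'i; omega)
    have e1 : A i j = A i (Fin.last (n + 1)) * A (Fin.last (n + 1)) 0 * A 0 j
        / (A (Fin.last (n + 1)) (Fin.last (n + 1)) * A 0 0) :=
      (eq_div_iff (mul_ne_zero (hfull _ _) (hfull 0 0))).mpr (aux_Lo hic i j hji)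
    have e2 : A i j' = A i (Fin.last (n + 1)) * A (Fin.last (n + 1)) 0 * A 0 j'
        / (A (Fin.last (n + 1)) (Fin.last (n + 1)) * A 0 0) :=
      (eq_div_iff (mul_ne_zero (hfull _ _) (hfull 0 0))).mpr (aux_Lo hic i j' hj'i)
    rw [e1, e2, e3, e4]
    field_simp [hfull 0 0, hfull 0 (Fin.last (n + 1)),
      hfull (Fin.last (n + 1)) (Fin.last (n + 1))]

lemma offdiag0 {A : Matrix (Fin (n + 2)) (Fin (n + 2)) ℝ} (hfull : ∀ i j, A i j ≠ 0)
    (hic : InvCyclic A) (i : Fin (n + 2)) (hi : i ≠ 0) :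
    A i 0 * A (Fin.last (n + 1)) (Fin.last (n + 1))
      = A i (Fin.last (n + 1)) * A (Fin.last (n + 1)) 0 := by
  have h0i : (0 : Fin (n + 2)) < i := Fin.pos_of_ne_zero hi
  have hLo := aux_Lo hic i 0 h0i
  apply mul_right_cancel₀ (hfull 0 0)
  linear_combination hLo

lemma aux_sum {A : Matrix (Fin (n + 2)) (Fin (n + 2)) ℝ} (hfull : ∀ i j, A i j ≠ 0)
    (hic : InvCyclic A) (i j : Fin (n + 2)) :
    ∑ k, A i k * Cmat A k j = if i = j then diagProd A - cycProd A else 0 := by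
  have hL0 : Fin.last (n + 1) ≠ (0 : Fin (n + 2)) := by
    intro h; simpa using congrArg Fin.val h
  by_cases hj0 : j = 0
  · subst hj0
    have hz : ∀ k : Fin (n + 2), k ∉ ({0, Fin.last (n + 1)} : Finset (Fin (n + 2))) →
        A i k * Cmat A k 0 = 0 := by
      intro k hk
      simp only [Finset.mem_insert, Finset.mem_singleton, not_or] at hk
      rw [Cmat, Matrix.of_apply, if_neg (by simp), if_neg (fun hh => hk.2 hh.1),
        if_neg hk.1, mul_zero]
    rw [← Finset.sum_subset (Finset.subset_univ ({0, Fin.last (n + 1)} : Finset (Fin (n + 2))))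
      (fun k _ hk => hz k hk), Finset.sum_pair (Ne.symm hL0)]
    have c00 : Cmat A 0 0 = ∏ k ∈ Finset.univ \ {(0 : Fin (n + 2))}, A k k := by
      rw [Cmat, Matrix.of_apply, if_neg (by simp), if_neg (fun hh => hL0 hh.1.symm), if_pos rfl]
    have cL0 : Cmat A (Fin.last (n + 1)) 0 = -A (Fin.last (n + 1)) 0
        * ∏ k ∈ Finset.univ \ {Fin.last (n + 1), (0 : Fin (n + 2))}, A k k := by
      rw [Cmat, Matrix.of_apply, if_neg (by simp), if_pos ⟨rfl, rfl⟩]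
    rw [c00, cL0]
    by_cases hi : i = 0
    · subst hi
      rw [if_pos rfl]
      have hd1 := prodD1 A 0
      have hII := aux_identII hfull hic hL0
      linear_combination hd1 - hII
    · rw [if_neg hi]
      have hod := offdiag0 hfull hic i hi
      have hsplit := prodSplit A hfull (Fin.last (n + 1)) 0 hL0
      linear_combination (∏ k ∈ Finset.univ \ {Fin.last (n + 1), (0 : Fin (n + 2))}, A k k) * hod
        + A i 0 * hsplit
  · have hjv : (j : ℕ) ≠ 0 := fun h => hj0 (Fin.ext (by simpa using h))
    obtain ⟨j', hcoe⟩ : ∃ j' : Fin (n + 2), (j : ℕ) = (j' : ℕ) + 1 :=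
      ⟨⟨(j : ℕ) - 1, by have := j.isLt; omega⟩, by show (j : ℕ) = (j : ℕ) - 1 + 1; omega⟩
    have hne : j' ≠ j := fun h' => by rw [h'] at hcoe; omega
    have hz : ∀ k : Fin (n + 2), k ∉ ({j', j} : Finset (Fin (n + 2))) →
        A i k * Cmat A k j = 0 := by
      intro k hk
      simp only [Finset.mem_insert, Finset.mem_singleton, not_or] at hk
      rw [Cmat, Matrix.of_apply, if_neg (fun h => hk.1 (Fin.ext (by omega))),
        if_neg (fun hh => hj0 hh.2), if_neg hk.2, mul_zero]
    rw [← Finset.sum_subset (Finset.subset_univ ({j', j} : Finset (Fin (n + 2))))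
      (fun k _ hk => hz k hk), Finset.sum_pair hne]
    have cj'j : Cmat A j' j = -A j' j * ∏ k ∈ Finset.univ \ {j', j}, A k k := by
      rw [Cmat, Matrix.of_apply, if_pos hcoe]
    have cjj : Cmat A j j = ∏ k ∈ Finset.univ \ {j}, A k k := by
      rw [Cmat, Matrix.of_apply, if_neg (by omega), if_neg (fun hh => hj0 hh.2), if_pos rfl]
    rw [cj'j, cjj]
    by_cases hij : i = j
    · subst hij
      rw [if_pos rfl]
      have hI := aux_identI hfull hic j' i hcoe
      have hd1 := prodD1 A i
      linear_combination hd1 - hI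
    · rw [if_neg hij]
      have hod := offdiag1 hfull hic i j' j hcoe hij
      have hsplit := prodSplit A hfull j' j hne
      linear_combination (∏ k ∈ Finset.univ \ {j', j}, A k k) * hod + A i j * hsplit

end Stmt6Aux

open Stmt6Aux in
theorem stmt6 {n : ℕ} (A : Matrix (Fin (n + 2)) (Fin (n + 2)) ℝ) (hdet : A.det ≠ 0)
    (hfull : ∀ i j, A i j ≠ 0) (hic : InvCyclic A) :
    A⁻¹ = Matrix.of fun (i j : Fin (n + 2)) =>
      if (j : ℕ) = (i : ℕ) + 1 then
        -A i j * (∏ k ∈ Finset.univ \ {i, j}, A k k) / (diagProd A - cycProd A)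
      else if i = Fin.last (n + 1) ∧ j = 0 then
        -A i j * (∏ k ∈ Finset.univ \ {i, j}, A k k) / (diagProd A - cycProd A)
      else if i = j then (∏ k ∈ Finset.univ \ {i}, A k k) / (diagProd A - cycProd A)
      else 0 := by
  have hL0 : Fin.last (n + 1) ≠ (0 : Fin (n + 2)) := by
    intro h; simpa using congrArg Fin.val h
  have hACm : A * Cmat A = (diagProd A - cycProd A) • (1 : Matrix (Fin (n + 2)) (Fin (n + 2)) ℝ) := by
    ext i j
    rw [Matrix.mul_apply, aux_sum hfull hic i j]
    simp only [Matrix.smul_apply, Matrix.one_apply, smul_eq_mul]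
    split_ifs <;> ring
  have hdc : diagProd A - cycProd A ≠ 0 := by
    intro h
    have hAC : A * Cmat A = 0 := by rw [hACm, h, zero_smul]
    have hC0 : Cmat A 0 0 ≠ 0 := by
      have hval : Cmat A 0 0 = ∏ k ∈ Finset.univ \ {(0 : Fin (n + 2))}, A k k := by
        rw [Cmat, Matrix.of_apply, if_neg (by simp), if_neg (fun hh => hL0 hh.1.symm), if_pos rfl]
      rw [hval]
      exact Finset.prod_ne_zero_iff.mpr fun k _ => hfull k k
    have hU : IsUnit A.det := isUnit_iff_ne_zero.mpr hdet
    have hCz : Cmat A = 0 := by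
      calc Cmat A = (A⁻¹ * A) * Cmat A := by rw [Matrix.nonsing_inv_mul A hU, Matrix.one_mul]
        _ = A⁻¹ * (A * Cmat A) := by rw [Matrix.mul_assoc]
        _ = 0 := by rw [hAC, Matrix.mul_zero]
    rw [hCz] at hC0
    exact hC0 rfl
  apply Matrix.inv_eq_right_inv
  have hBC : (Matrix.of fun (i j : Fin (n + 2)) =>
      if (j : ℕ) = (i : ℕ) + 1 then
        -A i j * (∏ k ∈ Finset.univ \ {i, j}, A k k) / (diagProd A - cycProd A)
      else if i = Fin.last (n + 1) ∧ j = 0 then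
        -A i j * (∏ k ∈ Finset.univ \ {i, j}, A k k) / (diagProd A - cycProd A)
      else if i = j then (∏ k ∈ Finset.univ \ {i}, A k k) / (diagProd A - cycProd A)
      else 0) = (diagProd A - cycProd A)⁻¹ • Cmat A := by
    ext i j
    simp only [Matrix.of_apply, Matrix.smul_apply, Cmat, smul_eq_mul]
    split_ifs <;> simp [div_eq_inv_mul]
  rw [hBC, Matrix.mul_smul, hACm, smul_smul, inv_mul_cancel₀ hdc, one_smul]
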